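/- arXiv:2405.04363 — 7 statements merged into one kernel-verified Lean document; each statement's English description precedes it below -/
import Mathlib

section
/- Let P and Q be probability measures with Q ≪ P and r = dQ/dP. Define w_P(h) = P[r ≥ h], w_Q(h) = Q[r ≥ h], W_P(h) = ∫₀^h w_P(η) dη, and S_P(h) = 1 − W_P(h). Then for all h ≥ 0, S_P(h) = w_Q(h) − h·w_P(h). -/
open MeasureTheory Set

/-- The survival-function identity `S_P(h) = w_Q(h) − h·w_P(h)` for all `h ≥ 0`. -/
theorem SP_eq_wQ_sub_h_mul_wP {Ω : Type*} [MeasurableSpace Ω]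
    (P Q : Measure Ω) [IsProbabilityMeasure P] [IsProbabilityMeasure Q]
    (hQP : Q ≪ P)
    (r : Ω → ℝ) (hr : ∀ x, r x = (Q.rnDeriv P x).toReal)
    (wP : ℝ → ℝ) (hwP : ∀ h, wP h = (P {x | h ≤ r x}).toReal)
    (wQ : ℝ → ℝ) (hwQ : ∀ h, wQ h = (Q {x | h ≤ r x}).toReal)
    (WP : ℝ → ℝ) (hWP : ∀ h, WP h = ∫ η in Set.Ioc (0 : ℝ) h, wP η)
    (SP : ℝ → ℝ) (hSP : ∀ h, SP h = 1 - WP h) :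
    ∀ h : ℝ, 0 ≤ h → SP h = wQ h - h * wP h := by
  intro h hh
  set f : Ω → ℝ := fun x => (Q.rnDeriv P x).toReal with hf_def
  have hr' : r = f := funext hr
  have hf_meas : Measurable f := (Measure.measurable_rnDeriv Q P).ennreal_toReal
  have hf_nn : ∀ x, 0 ≤ f x := fun x => ENNReal.toReal_nonneg
  set A : Set Ω := {x | h ≤ f x} with hA_def
  have hA : MeasurableSet A := measurableSet_le measurable_const hf_meas
  -- the truncated function
  set g : Ω → ℝ := fun x => min (f x) h with hg_def
  have hg_meas : Measurable g := hf_meas.min measurable_const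
  have hg_nn : ∀ x, 0 ≤ g x := fun x => le_min (hf_nn x) hh
  have hg_le : ∀ x, g x ≤ h := fun x => min_le_right _ _
  have hg_int : Integrable g P := by
    refine Integrable.mono' (integrable_const h) hg_meas.aestronglyMeasurable ?_
    filter_upwards with x
    rw [Real.norm_eq_abs, abs_of_nonneg (hg_nn x)]
    exact hg_le x
  -- layer cake for g
  have key1 : ∫ x, g x ∂P = ∫ t in Ioc (0:ℝ) h, (P {x | t ≤ f x}).toReal := by
    rw [hg_int.integral_eq_integral_Ioc_meas_le (ae_of_all _ hg_nn) (ae_of_all _ hg_le)]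
    refine setIntegral_congr_fun measurableSet_Ioc (fun t ht => ?_)
    have hset : {x | t ≤ g x} = {x | t ≤ f x} := by
      ext x; simp only [hg_def, mem_setOf_eq, le_min_iff]
      exact and_iff_left ht.2
    rw [hset]
    rfl
  -- direct computation of ∫ g
  have hQA : (Q Aᶜ).toReal = 1 - (Q A).toReal := by
    rw [measure_compl hA (measure_ne_top _ _),
      ENNReal.toReal_sub_of_le (measure_mono (subset_univ _)) (measure_ne_top _ _)]
    simp
  have key2 : ∫ x, g x ∂P = h * (P A).toReal + (1 - (Q A).toReal) := by
    rw [← integral_add_compl hA hg_int]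
    have h1 : ∫ x in A, g x ∂P = h * (P A).toReal := by
      rw [setIntegral_congr_fun hA (g := fun _ => h) (fun x hx => min_eq_right hx)]
      simp [mul_comm]
      exact Or.inl rfl
    have h2 : ∫ x in Aᶜ, g x ∂P = 1 - (Q A).toReal := by
      rw [setIntegral_congr_fun hA.compl (g := f) (fun x hx => min_eq_left (le_of_lt (not_le.mp hx)))]
      rw [Measure.setIntegral_toReal_rnDeriv hQP]
      exact hQA
    rw [h1, h2]
  -- assemble
  rw [hSP, hWP, hwQ, hwP, hr']
  have hWPeq : (∫ η in Ioc (0:ℝ) h, wP η) = h * (P A).toReal + (1 - (Q A).toReal) := by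
    rw [← key2, key1]
    refine setIntegral_congr_fun measurableSet_Ioc (fun t _ => ?_)
    rw [hwP, hr']
  rw [hWPeq]
  ring
end

section
/- Let f : [0,∞) → [0,∞] be convex with f(1) = 0 and f'(1) = 0, and let P, Q be probability measures with Q ≪ P, r = dQ/dP, and D_f(Q‖P) = E_{X∼P}[f(r(X))]. Define w_P(h) = P[r ≥ h] and S_P(h) = 1 − ∫₀^h w_P(η) dη. Then for every a ≥ 1 with f'(a) > 0, S_P(a) ≤ D_f(Q‖P) / f'(a). -/
open MeasureTheory Set

/-- For a convex `f ≥ 0` on `[0, ∞)` with `f(1) = 0`, `f'(1) = 0`, the survival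
function satisfies `S_P(a) ≤ D_f(Q‖P) / f'(a)` for every `a ≥ 1` with `f'(a) > 0`. -/
theorem SP_le_fDiv_div_deriv {Ω : Type*} [MeasurableSpace Ω]
    (P Q : Measure Ω) [IsProbabilityMeasure P] [IsProbabilityMeasure Q]
    (hQP : Q ≪ P)
    (r : Ω → ℝ) (hr : ∀ x, r x = (Q.rnDeriv P x).toReal)
    (wP : ℝ → ℝ) (hwP : ∀ h, wP h = (P {x | h ≤ r x}).toReal)
    (SP : ℝ → ℝ) (hSP : ∀ h, SP h = 1 - ∫ η in Set.Ioc (0 : ℝ) h, wP η)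
    (f : ℝ → ℝ) (hconv : ConvexOn ℝ (Set.Ici 0) f)
    (hfnonneg : ∀ x ≥ (0 : ℝ), 0 ≤ f x) (hf1 : f 1 = 0)
    (hdiff : ∀ x > (0 : ℝ), DifferentiableAt ℝ f x) (hf'1 : deriv f 1 = 0)
    (Df : ℝ) (hDf : Df = ∫ x, f (r x) ∂P)
    (hint : Integrable (fun x => f (r x)) P) :
    ∀ a ≥ (1 : ℝ), 0 < deriv f a → SP a ≤ Df / deriv f a := by
  intro a ha hfa
  have hreq : r = fun x => (Q.rnDeriv P x).toReal := funext hr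
  have hr0 : ∀ x, 0 ≤ r x := fun x => by rw [hr x]; exact ENNReal.toReal_nonneg
  have hrmeas : Measurable r := by
    rw [hreq]; exact (Measure.measurable_rnDeriv Q P).ennreal_toReal
  have hrint : Integrable r P := by
    rw [hreq]; exact Measure.integrable_toReal_rnDeriv
  have hEr : ∫ x, r x ∂P = 1 := by
    rw [hreq, Measure.integral_toReal_rnDeriv hQP]; simp
  set g : Ω → ℝ := fun x => min (r x) a with hg
  have hgmeas : Measurable g := hrmeas.min measurable_const
  have hgint : Integrable g P := by
    refine hrint.mono hgmeas.aestronglyMeasurable (ae_of_all _ fun x => ?_)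
    have h1 : 0 ≤ g x := le_min (hr0 x) (by linarith)
    simp only [Real.norm_eq_abs, abs_of_nonneg h1, abs_of_nonneg (hr0 x)]
    exact min_le_left _ _
  -- layer cake
  have hlayer : ∫ x, g x ∂P = ∫ η in Set.Ioc (0 : ℝ) a, wP η := by
    rw [hgint.integral_eq_integral_Ioc_meas_le
      (ae_of_all _ fun x => by
        simp only [Pi.zero_apply]; exact le_min (hr0 x) (by linarith))
      (ae_of_all _ fun x => min_le_right _ _)]
    refine setIntegral_congr_fun measurableSet_Ioc fun t ht => ?_
    rw [hwP]
    congr 2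
    ext x
    simp only [hg, mem_setOf_eq, le_min_iff]
    exact ⟨fun h => h.1, fun h => ⟨h, ht.2⟩⟩
  set m : Ω → ℝ := fun x => max (r x - a) 0 with hm
  have hmg : ∀ x, m x = r x - g x := by
    intro x
    simp only [hm, hg]
    rcases le_total (r x) a with h | h
    · simp [max_eq_right, min_eq_left, h, sub_nonpos.mpr h]
    · simp [max_eq_left, min_eq_right, h, sub_nonneg.mpr h]
  have hmint : Integrable m P := by
    have : m = fun x => r x - g x := funext hmg
    rw [this]; exact hrint.sub hgint
  have hEm : ∫ x, m x ∂P = SP a := by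
    rw [funext hmg, integral_sub hrint hgint, hEr, hlayer, hSP]
  -- pointwise bound
  have hpt : ∀ x, deriv f a * m x ≤ f (r x) := by
    intro x
    rcases le_or_gt (r x) a with h | h
    · have : m x = 0 := by simp [hm, sub_nonpos.mpr h]
      rw [this, mul_zero]
      exact hfnonneg _ (hr0 x)
    · have hmx : m x = r x - a := by simp [hm, le_of_lt (sub_pos.mpr h)]
      have hs := hconv.deriv_le_slope (x := a) (y := r x)
        (by simp; linarith) (by simp [hr0 x]) h (hdiff a (by linarith))
      rw [slope_def_field] at hs
      have h2 : deriv f a * (r x - a) ≤ f (r x) - f a :=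
        (le_div_iff₀ (by linarith : (0:ℝ) < r x - a)).mp hs
      have hfa0 : 0 ≤ f a := hfnonneg a (by linarith)
      rw [hmx]; linarith
  have hmono : deriv f a * SP a ≤ Df := by
    rw [← hEm, ← integral_const_mul, hDf]
    exact integral_mono (hmint.const_mul _) hint hpt
  rw [le_div_iff₀ hfa]
  linarith [hmono]
end

section
/- In particular, taking f(x) = x·log₂x − (x−1)·log₂e (so that D_f = D_KL in bits), for every a ≥ 1 one has S_P(a) ≤ D_KL(Q‖P) / log₂ a (up to the precise form of f', the bound S_P(a)·f'(a) ≤ D_KL(Q‖P) holds with f'(a) = log₂ a). -/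
open MeasureTheory Set

lemma phi_nonneg (y : ℝ) (hy : 0 ≤ y) : 0 ≤ y * Real.log y - (y - 1) := by
  rcases eq_or_lt_of_le hy with h | h
  · simp [← h]
  · have h1 := Real.one_sub_inv_le_log_of_pos h
    have h2 : y * y⁻¹ = 1 := mul_inv_cancel₀ h.ne'
    nlinarith [mul_le_mul_of_nonneg_left h1 hy]

lemma aux_log (y a : ℝ) (hy : 0 ≤ y) (ha : 1 ≤ a) :
    max (y - a) 0 * Real.log a ≤ y * Real.log y - (y - 1) := by
  rcases le_total y a with h | h
  · rw [max_eq_right (by linarith), zero_mul]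
    exact phi_nonneg y hy
  · have ha0 : 0 < a := lt_of_lt_of_le one_pos ha
    have hy0 : 0 < y := lt_of_lt_of_le ha0 h
    rw [max_eq_left (by linarith)]
    have h1 : 1 - a / y ≤ Real.log y - Real.log a := by
      have := Real.one_sub_inv_le_log_of_pos (div_pos hy0 ha0)
      rwa [inv_div, Real.log_div hy0.ne' ha0.ne'] at this
    have h2 : y * (a / y) = a := by field_simp
    have h3 := phi_nonneg a ha0.le
    nlinarith [mul_le_mul_of_nonneg_left h1 hy0.le]

lemma aux_logb (y a : ℝ) (hy : 0 ≤ y) (ha : 1 ≤ a) :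
    max (y - a) 0 * Real.logb 2 a ≤ y * Real.logb 2 y - (y - 1) * (Real.log 2)⁻¹ := by
  have h2 : (0 : ℝ) < Real.log 2 := Real.log_pos one_lt_two
  have := mul_le_mul_of_nonneg_right (aux_log y a hy ha) (inv_nonneg.mpr h2.le)
  simp only [Real.logb]
  calc max (y - a) 0 * (Real.log a / Real.log 2)
      = max (y - a) 0 * Real.log a * (Real.log 2)⁻¹ := by ring
    _ ≤ (y * Real.log y - (y - 1)) * (Real.log 2)⁻¹ := this
    _ = y * (Real.log y / Real.log 2) - (y - 1) * (Real.log 2)⁻¹ := by ring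

/-- KL specialization of the survival bound: for every `a ≥ 1`,
`S_P(a) · log₂ a ≤ D_KL(Q‖P)` where `D_KL(Q‖P) = ∫ r log₂ r dP`. -/
theorem SP_mul_logb_le_KL {Ω : Type*} [MeasurableSpace Ω]
    (P Q : Measure Ω) [IsProbabilityMeasure P] [IsProbabilityMeasure Q]
    (hQP : Q ≪ P)
    (r : Ω → ℝ) (hr : ∀ x, r x = (Q.rnDeriv P x).toReal)
    (wP : ℝ → ℝ) (hwP : ∀ h, wP h = (P {x | h ≤ r x}).toReal)
    (SP : ℝ → ℝ) (hSP : ∀ h, SP h = 1 - ∫ η in Set.Ioc (0 : ℝ) h, wP η)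
    (DKL : ℝ) (hDKL : DKL = ∫ x, r x * Real.logb 2 (r x) ∂P)
    (hint : Integrable (fun x => r x * Real.logb 2 (r x)) P) :
    ∀ a ≥ (1 : ℝ), SP a * Real.logb 2 a ≤ DKL := by
  intro a ha
  have hre : r = fun x => (Q.rnDeriv P x).toReal := funext hr
  have hr0 : ∀ x, 0 ≤ r x := fun x => by rw [hr]; exact ENNReal.toReal_nonneg
  have hrint : Integrable r P := by rw [hre]; exact Measure.integrable_toReal_rnDeriv
  have hr1 : ∫ x, r x ∂P = 1 := by
    rw [hre, Measure.integral_toReal_rnDeriv hQP]; simp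
  -- layer cake for g = min r a
  set g : Ω → ℝ := fun x => min (r x) a with hg
  have hgint : Integrable g P := hrint.inf (integrable_const a)
  have hlayer : ∫ x, g x ∂P = ∫ t in Ioc (0:ℝ) a,
      (P {x | t ≤ g x}).toReal :=
    hgint.integral_eq_integral_Ioc_meas_le
      (ae_of_all _ fun x => by simp only [Pi.zero_apply]; exact le_min (hr0 x) (by linarith))
      (ae_of_all _ fun x => min_le_right _ _)
  have hSPint : ∫ η in Ioc (0:ℝ) a, wP η = ∫ x, g x ∂P := by
    rw [hlayer]
    refine setIntegral_congr_fun measurableSet_Ioc (fun t ht => ?_)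
    rw [hwP]
    have hset : {x | t ≤ g x} = {x | t ≤ r x} := by
      ext x
      simp only [mem_setOf_eq, hg, le_min_iff]
      exact ⟨fun h => h.1, fun h => ⟨h, ht.2⟩⟩
    rw [hset]
  have hSPa : SP a = ∫ x, max (r x - a) 0 ∂P := by
    rw [hSP, hSPint, ← hr1, ← integral_sub hrint hgint]
    refine integral_congr_ae (ae_of_all _ fun x => ?_)
    simp only [hg]
    rcases le_total (r x) a with h | h
    · rw [min_eq_left h, max_eq_right (by linarith)]; ring
    · rw [min_eq_right h, max_eq_left (by linarith)]
  -- the comparison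
  have hmaxint : Integrable (fun x => max (r x - a) 0) P :=
    (hrint.sub (integrable_const a)).sup (integrable_const 0)
  have hRHSint : Integrable
      (fun x => r x * Real.logb 2 (r x) - (r x - 1) * (Real.log 2)⁻¹) P :=
    hint.sub ((hrint.sub (integrable_const 1)).mul_const _)
  have hmono : ∫ x, max (r x - a) 0 * Real.logb 2 a ∂P ≤
      ∫ x, (r x * Real.logb 2 (r x) - (r x - 1) * (Real.log 2)⁻¹) ∂P := by
    refine integral_mono (hmaxint.mul_const _) hRHSint (fun x => ?_)
    exact aux_logb (r x) a (hr0 x) ha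
  have hsub1 : Integrable (fun x => r x - 1) P := by
    exact hrint.sub (integrable_const 1)
  have hsub2 : Integrable (fun x => (r x - 1) * (Real.log 2)⁻¹) P := by
    exact hsub1.mul_const _
  have hRHS : ∫ x, (r x * Real.logb 2 (r x) - (r x - 1) * (Real.log 2)⁻¹) ∂P = DKL := by
    rw [integral_sub hint hsub2, integral_mul_const, integral_sub hrint (integrable_const 1),
      hr1, hDKL]
    simp
  calc SP a * Real.logb 2 a = ∫ x, max (r x - a) 0 * Real.logb 2 a ∂P := by
        rw [hSPa, integral_mul_const]
    _ ≤ _ := hmono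
    _ = DKL := hRHS
end

section
/- Let Q ≪ P with r = dQ/dP and W_P(h) = ∫₀^h P[r ≥ η]dη. Fix M > 0 with W_P(M) > 0 and define the truncated measure Q_M by dQ_M/dP = min(r, M)/W_P(M). Then Q_M is a probability measure, and setting M̃ = M/W_P(M), the total variation distance satisfies D_TV(Q_M, Q) = S_P(M̃), where S_P(h) = 1 − W_P(h). -/
open MeasureTheory Set

/-- The truncated target `Q_M` with `dQ_M/dP = min(r, M)/W_P(M)` is a probability
measure, and its total variation distance from `Q` equals `S_P(M̃)` with
`M̃ = M / W_P(M)`.  Total variation is expressed as the greatest value of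
`|Q_M(B) − Q(B)|` over measurable `B`. -/
theorem truncated_target_tv {Ω : Type*} [MeasurableSpace Ω]
    (P Q : Measure Ω) [IsProbabilityMeasure P] [IsProbabilityMeasure Q]
    (hQP : Q ≪ P)
    (r : Ω → ℝ) (hr : ∀ x, r x = (Q.rnDeriv P x).toReal)
    (wP : ℝ → ℝ) (hwP : ∀ h, wP h = (P {x | h ≤ r x}).toReal)
    (WP : ℝ → ℝ) (hWP : ∀ h, WP h = ∫ η in Set.Ioc (0 : ℝ) h, wP η)
    (SP : ℝ → ℝ) (hSP : ∀ h, SP h = 1 - WP h)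
    (M : ℝ) (hM : 0 < M) (hWM : 0 < WP M)
    (QM : Measure Ω)
    (hQM : QM = P.withDensity (fun x => ENNReal.ofReal (min (r x) M / WP M))) :
    IsProbabilityMeasure QM ∧
      IsGreatest {d : ℝ | ∃ B : Set Ω, MeasurableSet B ∧
          d = |(QM B).toReal - (Q B).toReal|} (SP (M / WP M)) := by
  have hrE : r = fun x => (Q.rnDeriv P x).toReal := funext hr
  have hrm : Measurable r := by rw [hrE]; exact (Q.measurable_rnDeriv P).ennreal_toReal
  have hrnn : ∀ x, 0 ≤ r x := fun x => by rw [hr x]; exact ENNReal.toReal_nonneg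
  have hrint : Integrable r P := by rw [hrE]; exact Measure.integrable_toReal_rnDeriv
  have hr1 : ∫ x, r x ∂P = 1 := by
    rw [hrE, Measure.integral_toReal_rnDeriv hQP]; simp
  -- integrability of truncated functions
  have hintmin : ∀ c : ℝ, 0 ≤ c → Integrable (fun x => min (r x) c) P := by
    intro c hc
    refine Integrable.mono hrint ((hrm.min measurable_const).aestronglyMeasurable) ?_
    filter_upwards with x
    rw [Real.norm_eq_abs, Real.norm_eq_abs, abs_of_nonneg (hrnn x),
      abs_of_nonneg (le_min (hrnn x) hc)]
    exact min_le_left _ _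
  -- layer cake
  have hmin : ∀ c : ℝ, 0 < c → ∫ x, min (r x) c ∂P = WP c := by
    intro c hc
    rw [((hintmin c hc.le)).integral_eq_integral_Ioc_meas_le
      (Filter.Eventually.of_forall fun x => le_min (hrnn x) hc.le)
      (Filter.Eventually.of_forall fun x => min_le_right _ _)]
    rw [hWP c]
    refine setIntegral_congr_fun measurableSet_Ioc fun t ht => ?_
    rw [hwP t]
    congr 2
    ext x
    simp only [mem_setOf_eq, le_min_iff]
    exact ⟨fun h => h.1, fun h => ⟨h, le_trans ht.2 le_rfl⟩⟩
  have hWle1 : WP M ≤ 1 := by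
    rw [← hmin M hM, ← hr1]
    exact integral_mono (hintmin M hM.le) hrint fun x => min_le_left _ _
  set Mt := M / WP M with hMtdef
  have hMtpos : 0 < Mt := div_pos hM hWM
  have hMMt : M ≤ Mt := by
    rw [hMtdef, le_div_iff₀ hWM]
    exact mul_le_of_le_one_right hM.le hWle1
  set g : Ω → ℝ := fun x => min (r x) M / WP M with hgdef
  have hgnn : ∀ x, 0 ≤ g x := fun x => div_nonneg (le_min (hrnn x) hM.le) hWM.le
  have hgint : Integrable g P := (hintmin M hM.le).div_const _
  have hgint1 : ∫ x, g x ∂P = 1 := by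
    rw [hgdef]
    simp only [integral_div, hmin M hM, div_self hWM.ne']
  -- QM values
  have hQMB : ∀ B : Set Ω, MeasurableSet B → QM B = ENNReal.ofReal (∫ x in B, g x ∂P) := by
    intro B hB
    rw [hQM, withDensity_apply _ hB,
      ← ofReal_integral_eq_lintegral_ofReal (hgint.restrict)
        (Filter.Eventually.of_forall fun x => hgnn x)]
  have hQMprob : IsProbabilityMeasure QM := by
    constructor
    rw [hQMB univ MeasurableSet.univ, Measure.restrict_univ, hgint1, ENNReal.ofReal_one]
  have hQMBr : ∀ B : Set Ω, MeasurableSet B → (QM B).toReal = ∫ x in B, g x ∂P := by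
    intro B hB
    rw [hQMB B hB, ENNReal.toReal_ofReal (integral_nonneg fun x => hgnn x)]
  have hQBr : ∀ B : Set Ω, (Q B).toReal = ∫ x in B, r x ∂P := by
    intro B
    rw [hrE]
    exact (Measure.setIntegral_toReal_rnDeriv hQP B).symm
  -- pointwise comparisons
  have hgr : ∀ x, r x ≤ Mt → r x ≤ g x := by
    intro x hx
    rcases le_total (r x) M with h | h
    · rw [hgdef]; simp only [min_eq_left h]
      rw [le_div_iff₀ hWM]
      exact mul_le_of_le_one_right (hrnn x) hWle1
    · rw [hgdef]; simp only [min_eq_right h]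
      exact hx
  have hgMt : ∀ x, Mt < r x → g x = Mt := by
    intro x hx
    rw [hgdef]
    simp only [min_eq_right (le_trans hMMt hx.le)]
    exact hMtdef.symm
  have hmax_eq : ∀ x, max (r x - g x) 0 = r x - min (r x) Mt := by
    intro x
    rcases le_or_gt (r x) Mt with h | h
    · rw [min_eq_left h, sub_self, max_eq_right (sub_nonpos.2 (hgr x h))]
    · rw [min_eq_right h.le, hgMt x h, max_eq_left (sub_nonneg.2 h.le)]
  have hintmax : Integrable (fun x => max (r x - g x) 0) P := (hrint.sub hgint).pos_part
  have hintmax' : Integrable (fun x => max (g x - r x) 0) P := (hgint.sub hrint).pos_part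
  -- T = SP Mt
  set T := ∫ x, max (r x - g x) 0 ∂P with hTdef
  have hT : T = SP Mt := by
    rw [hTdef, hSP]
    calc ∫ x, max (r x - g x) 0 ∂P = ∫ x, (r x - min (r x) Mt) ∂P :=
          integral_congr_ae (Filter.Eventually.of_forall hmax_eq)
      _ = (∫ x, r x ∂P) - ∫ x, min (r x) Mt ∂P := integral_sub hrint (hintmin Mt hMtpos.le)
      _ = 1 - WP Mt := by rw [hr1, hmin Mt hMtpos]
  have hT' : ∫ x, max (g x - r x) 0 ∂P = T := by
    have key : ∫ x, (max (g x - r x) 0 - max (r x - g x) 0) ∂P = 0 := by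
      have : ∀ x, max (g x - r x) 0 - max (r x - g x) 0 = g x - r x := by
        intro x
        rcases le_total (g x) (r x) with h | h
        · rw [max_eq_right (sub_nonpos.2 h), max_eq_left (sub_nonneg.2 h)]; ring
        · rw [max_eq_left (sub_nonneg.2 h), max_eq_right (sub_nonpos.2 h)]; ring
      rw [integral_congr_ae (Filter.Eventually.of_forall this), integral_sub hgint hrint,
        hgint1, hr1, sub_self]
    rw [integral_sub hintmax' hintmax] at key
    linarith
  refine ⟨hQMprob, ?_, ?_⟩
  · -- membership: B₀ = {x | Mt < r x}
    refine ⟨{x | Mt < r x}, measurableSet_lt measurable_const hrm, ?_⟩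
    rw [hQMBr _ (measurableSet_lt measurable_const hrm), hQBr, ← hT]
    have h1 : ∫ x in {x | Mt < r x}, max (r x - g x) 0 ∂P = T := by
      rw [hTdef]
      exact setIntegral_eq_integral_of_forall_compl_eq_zero fun x hx => by
        rw [max_eq_right (sub_nonpos.2 (hgr x (not_lt.1 hx)))]
    have h2 : ∫ x in {x | Mt < r x}, max (r x - g x) 0 ∂P
        = ∫ x in {x | Mt < r x}, (r x - g x) ∂P := by
      refine setIntegral_congr_fun (measurableSet_lt measurable_const hrm) fun x hx => ?_
      rw [hgMt x hx, max_eq_left (sub_nonneg.2 (le_of_lt hx))]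
    have h3 : ∫ x in {x | Mt < r x}, (r x - g x) ∂P
        = (∫ x in {x | Mt < r x}, r x ∂P) - ∫ x in {x | Mt < r x}, g x ∂P :=
      integral_sub hrint.restrict hgint.restrict
    have hTnn : 0 ≤ T := by
      rw [hTdef]; exact integral_nonneg fun x => le_max_right _ _
    rw [abs_sub_comm, abs_of_nonneg (by linarith [h1, h2, h3] : (0:ℝ) ≤ _)]
    linarith [h1, h2, h3]
  · -- upper bound
    rintro d ⟨B, hB, rfl⟩
    rw [hQMBr B hB, hQBr]
    have h3 : ∫ x in B, g x ∂P - ∫ x in B, r x ∂P = ∫ x in B, (g x - r x) ∂P :=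
      (integral_sub hgint.restrict hrint.restrict).symm
    have h4 : ∫ x in B, r x ∂P - ∫ x in B, g x ∂P = ∫ x in B, (r x - g x) ∂P :=
      (integral_sub hrint.restrict hgint.restrict).symm
    have hub1 : ∫ x in B, (g x - r x) ∂P ≤ T := by
      calc ∫ x in B, (g x - r x) ∂P ≤ ∫ x in B, max (g x - r x) 0 ∂P :=
            integral_mono ((hgint.sub hrint).restrict) (hintmax'.restrict)
              fun x => le_max_left _ _
        _ ≤ ∫ x, max (g x - r x) 0 ∂P :=
            setIntegral_le_integral hintmax' (Filter.Eventually.of_forall fun x => le_max_right _ _)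
        _ = T := hT'
    have hub2 : ∫ x in B, (r x - g x) ∂P ≤ T := by
      calc ∫ x in B, (r x - g x) ∂P ≤ ∫ x in B, max (r x - g x) 0 ∂P :=
            integral_mono ((hrint.sub hgint).restrict) (hintmax.restrict)
              fun x => le_max_left _ _
        _ ≤ ∫ x, max (r x - g x) 0 ∂P :=
            setIntegral_le_integral hintmax (Filter.Eventually.of_forall fun x => le_max_right _ _)
        _ = T := rfl
    rw [← hT]
    exact abs_le.2 ⟨by linarith, by linarith⟩
end

section
/- Let Q ≪ P with r = dQ/dP, and define W_P(h) = ∫₀^h P[r ≥ η]dη. Then the function φ(h) = h / W_P(h) is nondecreasing on (0, ∞); more precisely, for 0 < h₁ ≤ h₂ with W_P(h₁) > 0 one has h₁/W_P(h₁) ≤ h₂/W_P(h₂). Moreover, the inequality is strict whenever h₁ is strictly larger than the Q-essential infimum of r. -/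
open MeasureTheory Set

/-- The function `φ(h) = h / W_P(h)` is nondecreasing on `(0, ∞)`, and strictly
increasing beyond the `Q`-essential infimum of `r`. -/
theorem phi_monotone {Ω : Type*} [MeasurableSpace Ω]
    (P Q : Measure Ω) [IsProbabilityMeasure P] [IsProbabilityMeasure Q]
    (hQP : Q ≪ P)
    (r : Ω → ℝ) (hr : ∀ x, r x = (Q.rnDeriv P x).toReal)
    (wP : ℝ → ℝ) (hwP : ∀ h, wP h = (P {x | h ≤ r x}).toReal)
    (WP : ℝ → ℝ) (hWP : ∀ h, WP h = ∫ η in Set.Ioc (0 : ℝ) h, wP η) :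
    (∀ h₁ h₂ : ℝ, 0 < h₁ → h₁ ≤ h₂ → 0 < WP h₁ →
        h₁ / WP h₁ ≤ h₂ / WP h₂) ∧
    (∀ h₁ h₂ : ℝ, 0 < h₁ → h₁ < h₂ → 0 < WP h₁ → essInf r Q < h₁ →
        h₁ / WP h₁ < h₂ / WP h₂) := by
  -- Basic properties of wP
  have hw_nonneg : ∀ h, 0 ≤ wP h := fun h => by rw [hwP]; exact ENNReal.toReal_nonneg
  have hw_anti : Antitone wP := by
    intro a b hab
    rw [hwP, hwP]
    exact ENNReal.toReal_mono (measure_ne_top _ _)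
      (measure_mono fun x hx => le_trans hab hx)
  have hint : ∀ a b : ℝ, IntervalIntegrable wP volume a b := fun a b =>
    hw_anti.intervalIntegrable
  -- WP as interval integral
  have hWP' : ∀ h : ℝ, 0 ≤ h → WP h = ∫ η in (0:ℝ)..h, wP η := by
    intro h hh
    rw [hWP, intervalIntegral.integral_of_le hh]
  -- Lemma A: h * wP h ≤ WP h for 0 < h
  have hA : ∀ h : ℝ, 0 < h → h * wP h ≤ WP h := by
    intro h hh
    rw [hWP' h hh.le]
    have : ∫ η in (0:ℝ)..h, wP h ≤ ∫ η in (0:ℝ)..h, wP η := by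
      apply intervalIntegral.integral_mono_on hh.le (by simp) (hint 0 h)
      intro x hx
      exact hw_anti hx.2
    simpa using this
  -- Lemma B: WP h₂ ≤ WP h₁ + (h₂ - h₁) * wP h₁ for 0 < h₁ ≤ h₂
  have hB : ∀ h₁ h₂ : ℝ, 0 < h₁ → h₁ ≤ h₂ → WP h₂ ≤ WP h₁ + (h₂ - h₁) * wP h₁ := by
    intro h₁ h₂ hh₁ h12
    rw [hWP' h₁ hh₁.le, hWP' h₂ (hh₁.le.trans h12)]
    rw [← intervalIntegral.integral_add_adjacent_intervals (hint 0 h₁) (hint h₁ h₂)]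
    have : ∫ η in h₁..h₂, wP η ≤ ∫ η in h₁..h₂, wP h₁ := by
      apply intervalIntegral.integral_mono_on h12 (hint h₁ h₂) (by simp)
      intro x hx
      exact hw_anti hx.1
    simpa using this
  -- WP is monotone on positives
  have hWmono : ∀ h₁ h₂ : ℝ, 0 < h₁ → h₁ ≤ h₂ → WP h₁ ≤ WP h₂ := by
    intro h₁ h₂ hh₁ h12
    rw [hWP' h₁ hh₁.le, hWP' h₂ (hh₁.le.trans h12),
      ← intervalIntegral.integral_add_adjacent_intervals (hint 0 h₁) (hint h₁ h₂)]
    have : (0:ℝ) ≤ ∫ η in h₁..h₂, wP η := by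
      apply intervalIntegral.integral_nonneg h12
      intro x _; exact hw_nonneg x
    linarith
  -- Strict lemma C: if essInf r Q < h₁ then h₁ * wP h₁ < WP h₁
  have hC : ∀ h₁ : ℝ, 0 < h₁ → essInf r Q < h₁ → h₁ * wP h₁ < WP h₁ := by
    intro h₁ hh₁ hess
    -- Q {r < h₁} ≠ 0
    have hQlt : Q {x | r x < h₁} ≠ 0 := by
      intro h0
      have hae : ∀ᵐ x ∂Q, h₁ ≤ r x := by
        rw [ae_iff]
        simpa [not_le] using h0
      have hbdd : ∃ x₀ : ℝ, Q {x | r x ≤ x₀} ≠ 0 := by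
        by_contra hc
        push_neg at hc
        have hcov : (Set.univ : Set Ω) ⊆ ⋃ n : ℕ, {x | r x ≤ n} := fun x _ =>
          Set.mem_iUnion.2 ⟨⌈r x⌉₊, show r x ≤ _ from Nat.le_ceil _⟩
        have : Q Set.univ = 0 :=
          measure_mono_null hcov (measure_iUnion_null fun n => hc n)
        simp [measure_univ] at this
      obtain ⟨x₀, hx₀⟩ := hbdd
      have : h₁ ≤ essInf r Q := by
        rw [essInf_eq_sSup]
        apply le_csSup
        · refine ⟨x₀, fun a ha => ?_⟩
          by_contra hax
          push_neg at hax
          exact hx₀ (measure_mono_null (fun x hx => lt_of_le_of_lt hx hax) ha)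
        · exact h0
      exact absurd hess (not_lt.mpr this)
    -- a.e. Q, 0 < r
    have hrpos : ∀ᵐ x ∂Q, 0 < r x := by
      filter_upwards [Measure.rnDeriv_pos hQP, hQP.ae_le (Measure.rnDeriv_lt_top Q P)]
        with x h1 h2
      rw [hr]
      exact ENNReal.toReal_pos h1.ne' h2.ne
    -- Q {0 < r < h₁} ≠ 0
    have hQlt' : Q {x | 0 < r x ∧ r x < h₁} ≠ 0 := by
      intro h0
      apply hQlt
      have : {x | r x < h₁} ⊆ {x | 0 < r x ∧ r x < h₁} ∪ {x | ¬ 0 < r x} := by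
        intro x hx
        by_cases h : 0 < r x
        · exact Or.inl ⟨h, hx⟩
        · exact Or.inr h
      refine measure_mono_null this ?_
      rw [measure_union_null_iff]
      exact ⟨h0, by rw [← ae_iff] at *; exact hrpos⟩
    have hPlt : P {x | 0 < r x ∧ r x < h₁} ≠ 0 := fun h0 => hQlt' (hQP h0)
    -- find ε
    have hsub : {x | 0 < r x ∧ r x < h₁} ⊆
        ⋃ n : ℕ, {x | 1 / (n + 1 : ℝ) ≤ r x ∧ r x < h₁} := by
      intro x hx
      obtain ⟨n, hn⟩ := exists_nat_one_div_lt hx.1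
      exact Set.mem_iUnion.2 ⟨n, hn.le, hx.2⟩
    have hex : ∃ n : ℕ, P {x | 1 / (n + 1 : ℝ) ≤ r x ∧ r x < h₁} ≠ 0 := by
      by_contra hc
      push_neg at hc
      exact hPlt (measure_mono_null hsub (measure_iUnion_null hc))
    obtain ⟨n, hn⟩ := hex
    set ε : ℝ := 1 / (n + 1 : ℝ) with hε_def
    have hε_pos : 0 < ε := by positivity
    set A : Set Ω := {x | ε ≤ r x ∧ r x < h₁} with hA_def
    have hA_ne : P A ≠ 0 := hn
    have hε_lt : ε < h₁ := by
      have hne : A.Nonempty := Set.nonempty_iff_ne_empty.2 fun h =>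
        hA_ne (by rw [hA_def] at h ⊢; rw [h]; exact measure_empty)
      obtain ⟨x, hx⟩ := hne
      exact lt_of_le_of_lt hx.1 hx.2
    set δ : ℝ := (P A).toReal with hδ_def
    have hδ_pos : 0 < δ := ENNReal.toReal_pos hA_ne (measure_ne_top _ _)
    -- measurability of r
    have hrmeas : Measurable r := by
      have : Measurable fun x => (Q.rnDeriv P x).toReal :=
        (Measure.measurable_rnDeriv Q P).ennreal_toReal
      convert this using 1
      funext x; exact hr x
    have hAmeas : MeasurableSet A :=
      (hrmeas measurableSet_Ici).inter (hrmeas measurableSet_Iio)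
    -- wP ε ≥ wP h₁ + δ
    have hwε : wP h₁ + δ ≤ wP ε := by
      have hunion : {x | h₁ ≤ r x} ∪ A ⊆ {x | ε ≤ r x} := by
        rintro x (hx | hx)
        · exact le_trans hε_lt.le hx
        · exact hx.1
      have hdisj : Disjoint {x | h₁ ≤ r x} A := by
        rw [Set.disjoint_left]
        intro x hx hx'
        exact absurd hx'.2 (not_lt.mpr hx)
      have : P ({x | h₁ ≤ r x} ∪ A) = P {x | h₁ ≤ r x} + P A := measure_union hdisj hAmeas
      have hle : P {x | h₁ ≤ r x} + P A ≤ P {x | ε ≤ r x} := by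
        rw [← this]; exact measure_mono hunion
      rw [hwP, hwP, hδ_def]
      rw [← ENNReal.toReal_add (measure_ne_top _ _) (measure_ne_top _ _)]
      exact ENNReal.toReal_mono (measure_ne_top _ _) hle
    -- split integral
    rw [hWP' h₁ hh₁.le,
      ← intervalIntegral.integral_add_adjacent_intervals (hint 0 ε) (hint ε h₁)]
    have h1 : ε * wP h₁ + ε * δ ≤ ∫ η in (0:ℝ)..ε, wP η := by
      have : ∫ η in (0:ℝ)..ε, (wP h₁ + δ) ≤ ∫ η in (0:ℝ)..ε, wP η := by
        apply intervalIntegral.integral_mono_on hε_pos.le (by simp) (hint 0 ε)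
        intro x hx
        exact le_trans hwε (hw_anti hx.2)
      simpa using this
    have h2 : (h₁ - ε) * wP h₁ ≤ ∫ η in ε..h₁, wP η := by
      have : ∫ η in ε..h₁, wP h₁ ≤ ∫ η in ε..h₁, wP η := by
        apply intervalIntegral.integral_mono_on hε_lt.le (by simp) (hint ε h₁)
        intro x hx
        exact hw_anti hx.2
      simpa using this
    nlinarith [hε_pos, hδ_pos]
  -- conclude
  constructor
  · intro h₁ h₂ hh₁ h12 hW₁
    have hW₂ : 0 < WP h₂ := lt_of_lt_of_le hW₁ (hWmono h₁ h₂ hh₁ h12)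
    rw [div_le_div_iff₀ hW₁ hW₂]
    have hB' := hB h₁ h₂ hh₁ h12
    have hA' := hA h₁ hh₁
    nlinarith
  · intro h₁ h₂ hh₁ h12 hW₁ hess
    have hW₂ : 0 < WP h₂ := lt_of_lt_of_le hW₁ (hWmono h₁ h₂ hh₁ h12.le)
    rw [div_lt_div_iff₀ hW₁ hW₂]
    have hB' := hB h₁ h₂ hh₁ h12.le
    have hC' := hC h₁ hh₁ hess
    nlinarith
end

section
/- (Strengthened Chatterjee–Diaconis bound, variance part) Let Q ≪ P with r = dQ/dP, let φ ∈ L²(Q), fix a > 0, and define h(x) = φ(x)·min(a/r(x), 1). Let X₁,...,X_n be i.i.d. P-distributed and I_n(h) = (1/n)Σᵢ h(Xᵢ)r(Xᵢ), I(h) = E_{Y∼Q}[h(Y)]. Then E[(I_n(h) − I(h))²] ≤ (a/n)·‖φ‖²_{L²(Q)}. -/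
open MeasureTheory Set
open scoped ProbabilityTheory

section Aux

variable {Ω : Type*} [m0 : MeasurableSpace Ω]

lemma cd_pi_eval_measurePreserving (P : Measure Ω) [IsProbabilityMeasure P]
    (n : ℕ) (i : Fin n) :
    MeasurePreserving (fun ω : Fin n → Ω => ω i) (Measure.pi fun _ => P) P := by
  refine ⟨measurable_pi_apply i, ?_⟩
  ext s hs
  rw [Measure.map_apply (measurable_pi_apply i) hs]
  have hpre : (fun ω : Fin n → Ω => ω i) ⁻¹' s
      = Set.pi Set.univ (fun j => if j = i then s else Set.univ) := by
    ext ω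
    simp only [Set.mem_preimage, Set.mem_pi, Set.mem_univ, true_implies]
    constructor
    · intro hω j
      by_cases hj : j = i
      · subst hj; simp [hω]
      · simp [hj]
    · intro hω
      have := hω i
      simpa using this
  rw [hpre, Measure.pi_pi]
  simp [apply_ite, Finset.prod_ite_eq']

lemma cd_pi_eval_iIndepFun (P : Measure Ω) [IsProbabilityMeasure P] (n : ℕ) :
    ProbabilityTheory.iIndepFun
      (fun i (ω : Fin n → Ω) => ω i) (Measure.pi fun _ => P) := by
  rw [ProbabilityTheory.iIndepFun_iff_measure_inter_preimage_eq_mul]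
  intro S sets hsets
  have h1 : (⋂ i ∈ S, (fun ω : Fin n → Ω => ω i) ⁻¹' sets i)
      = Set.pi Set.univ (fun j => if j ∈ S then sets j else Set.univ) := by
    ext ω
    simp only [Set.mem_iInter, Set.mem_preimage, Set.mem_pi, Set.mem_univ, true_implies]
    constructor
    · intro H j
      by_cases hj : j ∈ S
      · simpa [hj] using H j hj
      · simp [hj]
    · intro H j hj
      have := H j
      rwa [if_pos hj] at this
  have h2 : ∀ i ∈ S, (Measure.pi fun _ : Fin n => P) ((fun ω : Fin n → Ω => ω i) ⁻¹' sets i)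
      = P (sets i) := fun i hi =>
    (cd_pi_eval_measurePreserving P n i).measure_preimage (hsets i hi).nullMeasurableSet
  rw [h1, Measure.pi_pi, Finset.prod_congr rfl h2]
  have : ∀ j : Fin n, P (if j ∈ S then sets j else Set.univ)
      = if j ∈ S then P (sets j) else 1 := by
    intro j; split <;> simp
  rw [Finset.prod_congr rfl fun j _ => this j, Finset.prod_ite_mem Finset.univ S fun j => P (sets j),
    Finset.univ_inter]

end Aux

/-- Strengthened Chatterjee–Diaconis bound, variance part: for the truncated
test function `h(x) = φ(x)·min(a/r(x), 1)` and i.i.d. `P`-samples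
`X₁, ..., X_n`, the importance-sampling estimator `I_n(h) = (1/n)∑ h(Xᵢ)r(Xᵢ)`
satisfies `E[(I_n(h) − I(h))²] ≤ (a/n)·‖φ‖²_{L²(Q)}`. -/
theorem cd_variance_bound {Ω : Type*} [MeasurableSpace Ω]
    (P Q : Measure Ω) [IsProbabilityMeasure P] [IsProbabilityMeasure Q]
    (hQP : Q ≪ P)
    (r : Ω → ℝ) (hr : ∀ x, r x = (Q.rnDeriv P x).toReal)
    (φ : Ω → ℝ) (hφmeas : Measurable φ) (hφ : MeasureTheory.MemLp φ 2 Q)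
    (a : ℝ) (ha : 0 < a)
    (h : Ω → ℝ) (hdef : ∀ x, h x = φ x * min (a / r x) 1)
    (n : ℕ) (hn : 0 < n)
    (I : ℝ) (hI : I = ∫ x, h x ∂Q) :
    ∫ ω : Fin n → Ω,
        ((1 / (n : ℝ)) * ∑ i, h (ω i) * r (ω i) - I) ^ 2
        ∂(Measure.pi fun _ => P)
      ≤ (a / n) * ∫ x, (φ x) ^ 2 ∂Q := by
  classical
  have hn' : (n : ℝ) ≠ 0 := Nat.cast_ne_zero.mpr hn.ne'
  have hrmeas : Measurable r := by
    have : Measurable fun x => (Q.rnDeriv P x).toReal :=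
      (Measure.measurable_rnDeriv Q P).ennreal_toReal
    simpa [funext hr] using this
  have hr0 : ∀ x, 0 ≤ r x := fun x => (hr x) ▸ ENNReal.toReal_nonneg
  have hmeas : Measurable h := by
    have : Measurable fun x => φ x * min (a / r x) 1 :=
      hφmeas.mul ((measurable_const.div hrmeas).min measurable_const)
    simpa [funext hdef] using this
  set g : Ω → ℝ := fun x => h x * r x with hgdef
  have hgmeas : Measurable g := hmeas.mul hrmeas
  -- key pointwise bound
  have key : ∀ x, g x ^ 2 ≤ a * ((φ x) ^ 2 * r x) := by
    intro x
    simp only [hgdef, hdef x]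
    rcases eq_or_lt_of_le (hr0 x) with h0 | h0
    · rw [← h0]; simp
    · have hmin : min (a / r x) 1 * r x = min a (r x) := by
        rw [min_mul_of_nonneg _ _ h0.le, div_mul_cancel₀ _ h0.ne', one_mul]
      have hcalc : (φ x * min (a / r x) 1 * r x) ^ 2
          = (φ x) ^ 2 * (min (a / r x) 1 * r x) ^ 2 := by ring
      rw [hcalc, hmin]
      have h1 : min a (r x) ≤ a := min_le_left _ _
      have h2 : min a (r x) ≤ r x := min_le_right _ _
      have h3 : 0 ≤ min a (r x) := le_min ha.le h0.le
      have h4 : (min a (r x)) ^ 2 ≤ a * r x := by nlinarith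
      calc (φ x) ^ 2 * (min a (r x)) ^ 2 ≤ (φ x) ^ 2 * (a * r x) := by
            exact mul_le_mul_of_nonneg_left h4 (sq_nonneg _)
        _ = a * ((φ x) ^ 2 * r x) := by ring
  -- integral identities via Radon-Nikodym
  have hrn_mul : ∀ (f : Ω → ℝ), (fun x => f x * r x) = fun x => (Q.rnDeriv P x).toReal • f x := by
    intro f; funext x; rw [hr x]; simp [mul_comm]
  have hEg : ∫ x, g x ∂P = I := by
    rw [hI, hgdef]
    rw [hrn_mul h]
    exact integral_rnDeriv_smul hQP
  have hφ2Q : Integrable (fun x => (φ x) ^ 2) Q := by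
    simpa [sq] using hφ.integrable_sq
  have hInt_φ2r : Integrable (fun x => (φ x) ^ 2 * r x) P := by
    rw [hrn_mul fun x => (φ x) ^ 2]
    exact (integrable_rnDeriv_smul_iff hQP).mpr hφ2Q
  have hEφ2 : ∫ x, (φ x) ^ 2 * r x ∂P = ∫ x, (φ x) ^ 2 ∂Q := by
    rw [hrn_mul fun x => (φ x) ^ 2]
    exact integral_rnDeriv_smul hQP
  have hg2int : Integrable (fun x => g x ^ 2) P := by
    refine Integrable.mono' (hInt_φ2r.const_mul a)
      ((hgmeas.pow_const 2).aestronglyMeasurable) (ae_of_all _ fun x => ?_)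
    rw [Real.norm_eq_abs, abs_of_nonneg (sq_nonneg _)]
    exact key x
  have hgL2 : MemLp g 2 P := by
    rw [memLp_two_iff_integrable_sq hgmeas.aestronglyMeasurable]
    simpa [sq] using hg2int
  have hg2bound : ∫ x, g x ^ 2 ∂P ≤ a * ∫ x, (φ x) ^ 2 ∂Q := by
    calc ∫ x, g x ^ 2 ∂P ≤ ∫ x, a * ((φ x) ^ 2 * r x) ∂P :=
          integral_mono hg2int (hInt_φ2r.const_mul a) key
      _ = a * ∫ x, (φ x) ^ 2 * r x ∂P := integral_const_mul a _
      _ = a * ∫ x, (φ x) ^ 2 ∂Q := by rw [hEφ2]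
  -- product measure setup
  set μ : Measure (Fin n → Ω) := Measure.pi fun _ => P with hμdef
  set X : Fin n → (Fin n → Ω) → ℝ := fun i ω => g (ω i) with hXdef
  have hMP : ∀ i : Fin n, MeasurePreserving (fun ω : Fin n → Ω => ω i) μ P :=
    fun i => cd_pi_eval_measurePreserving P n i
  have hXL2 : ∀ i, MemLp (X i) 2 μ := fun i => hgL2.comp_measurePreserving (hMP i)
  have hI_comp : ∀ (i : Fin n) (f : Ω → ℝ), AEStronglyMeasurable f P →
      (∫ ω, f (ω i) ∂μ) = ∫ x, f x ∂P := by
    intro i f hf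
    have hf' : AEStronglyMeasurable f (μ.map fun ω : Fin n → Ω => ω i) := by
      rw [(hMP i).map_eq]; exact hf
    conv_rhs => rw [← (hMP i).map_eq]
    rw [integral_map (measurable_pi_apply i).aemeasurable hf']
  -- independence
  have hIndepX : ProbabilityTheory.iIndepFun X μ := by
    have := (cd_pi_eval_iIndepFun P n).comp (fun _ => g) (fun _ => hgmeas)
    exact this
  have hVarSum : ProbabilityTheory.variance (∑ i, X i) μ = ∑ i, ProbabilityTheory.variance (X i) μ :=
    ProbabilityTheory.IndepFun.variance_sum (fun i _ => hXL2 i)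
      (fun i _ j _ hij => hIndepX.indepFun hij)
  -- variance of each coordinate
  have hEX : ∀ i, ∫ ω, X i ω ∂μ = I := fun i => by
    rw [hI_comp i g hgmeas.aestronglyMeasurable]; exact hEg
  have hVarX : ∀ i, ProbabilityTheory.variance (X i) μ = ProbabilityTheory.variance g P := by
    intro i
    rw [ProbabilityTheory.variance_eq_sub (hXL2 i), ProbabilityTheory.variance_eq_sub hgL2]
    have e1 : ∫ ω, (X i ^ 2) ω ∂μ = ∫ x, (g ^ 2) x ∂P := by
      simp only [Pi.pow_apply]
      exact hI_comp i (fun x => g x ^ 2) (hgmeas.pow_const 2).aestronglyMeasurable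
    have e2 : ∫ ω, X i ω ∂μ = ∫ x, g x ∂P := hI_comp i g hgmeas.aestronglyMeasurable
    rw [e1, e2]
  have hVarg : ProbabilityTheory.variance g P ≤ ∫ x, g x ^ 2 ∂P := by
    have := ProbabilityTheory.variance_le_expectation_sq (μ := P) hgmeas.aestronglyMeasurable
    simpa using this
  -- the sum
  have hSL2 : MemLp (∑ i, X i) 2 μ := memLp_finset_sum' _ fun i _ => hXL2 i
  have hES : ∫ ω, (∑ i, X i) ω ∂μ = (n : ℝ) * I := by
    simp only [Finset.sum_apply]
    rw [integral_finset_sum _ fun i _ => (hXL2 i).integrable one_le_two]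
    simp [hEX]
  have hVarS_eq : ProbabilityTheory.variance (∑ i, X i) μ = ∫ ω, ((∑ i, X i) ω - (n : ℝ) * I) ^ 2 ∂μ := by
    rw [ProbabilityTheory.variance_eq_integral hSL2.aestronglyMeasurable.aemeasurable, ← hES]
  -- main computation
  have hgoal_eq : ∀ ω : Fin n → Ω,
      ((1 / (n : ℝ)) * ∑ i, h (ω i) * r (ω i) - I) ^ 2
      = (1 / (n : ℝ)) ^ 2 * ((∑ i, X i) ω - (n : ℝ) * I) ^ 2 := by
    intro ω
    have hsum : (∑ i, X i) ω = ∑ i, h (ω i) * r (ω i) := by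
      simp [hXdef, hgdef, Finset.sum_apply]
    rw [hsum]
    field_simp
  calc ∫ ω : Fin n → Ω, ((1 / (n : ℝ)) * ∑ i, h (ω i) * r (ω i) - I) ^ 2 ∂μ
      = ∫ ω, (1 / (n : ℝ)) ^ 2 * ((∑ i, X i) ω - (n : ℝ) * I) ^ 2 ∂μ := by
        exact integral_congr_ae (ae_of_all _ hgoal_eq)
    _ = (1 / (n : ℝ)) ^ 2 * ∫ ω, ((∑ i, X i) ω - (n : ℝ) * I) ^ 2 ∂μ :=
        integral_const_mul _ _
    _ = (1 / (n : ℝ)) ^ 2 * ProbabilityTheory.variance (∑ i, X i) μ := by rw [hVarS_eq]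
    _ ≤ (1 / (n : ℝ)) ^ 2 * ((n : ℝ) * (a * ∫ x, (φ x) ^ 2 ∂Q)) := by
        refine mul_le_mul_of_nonneg_left ?_ (by positivity)
        rw [hVarSum]
        calc (∑ i, ProbabilityTheory.variance (X i) μ) = (n : ℝ) * ProbabilityTheory.variance g P := by
              simp [hVarX, Finset.sum_const, nsmul_eq_mul]
          _ ≤ (n : ℝ) * (a * ∫ x, (φ x) ^ 2 ∂Q) := by
              refine mul_le_mul_of_nonneg_left (hVarg.trans hg2bound) (by positivity)
    _ = (a / n) * ∫ x, (φ x) ^ 2 ∂Q := by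
        field_simp
end

section
/- (Strengthened Chatterjee–Diaconis bound, bias part) With the same setup, define w_Q-tail quantities via S_P(a) = 1 − ∫₀^a P(r ≥ η)dη. Then |I(φ) − I(h)| = E_{Y∼Q}[φ(Y) − h(Y)] (when φ ≥ 0 this is an equality of absolute values) and by Cauchy–Schwarz |I(φ) − I(h)| ≤ ‖φ‖_{L²(Q)} · S_P(a)^{1/2}. -/
open MeasureTheory Set
open scoped ENNReal


lemma cd_aux_tail {Ω : Type*} [MeasurableSpace Ω]
    (P Q : Measure Ω) [IsProbabilityMeasure P] [IsProbabilityMeasure Q]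
    (hQP : Q ≪ P) (a : ℝ) (ha : 0 < a) :
    ∫ x, max ((Q.rnDeriv P x).toReal - a) 0 ∂P
      = 1 - ∫ η in Set.Ioc (0 : ℝ) a, (P {x | η ≤ (Q.rnDeriv P x).toReal}).toReal := by
  set r : Ω → ℝ := fun x => (Q.rnDeriv P x).toReal with hr_def
  have hrm : Measurable r := (Measure.measurable_rnDeriv Q P).ennreal_toReal
  have hr_nonneg : ∀ x, 0 ≤ r x := fun x => ENNReal.toReal_nonneg
  set F : ℝ → ℝ≥0∞ := fun t => P {x | t ≤ r x} with hF_def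
  have hF_anti : Antitone F := fun s t hst =>
    measure_mono (fun x hx => le_trans hst hx)
  have hF_meas : Measurable F := hF_anti.measurable
  have hF_le1 : ∀ t, F t ≤ 1 := fun t => prob_le_one
  -- layer cake for r
  have h1 : ∫⁻ t in Ioi (0 : ℝ), F t ∂volume = 1 := by
    rw [← lintegral_eq_lintegral_meas_le P (Filter.Eventually.of_forall hr_nonneg)
      hrm.aemeasurable]
    have : ∫⁻ x, ENNReal.ofReal (r x) ∂P = ∫⁻ x, Q.rnDeriv P x ∂P := by
      refine lintegral_congr_ae ?_
      filter_upwards [Measure.rnDeriv_lt_top Q P] with x hx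
      exact ENNReal.ofReal_toReal hx.ne
    rw [this, Measure.lintegral_rnDeriv hQP, measure_univ]
  -- split
  have h2 : ∫⁻ t in Ioc (0 : ℝ) a, F t ∂volume + ∫⁻ t in Ioi a, F t ∂volume = 1 := by
    rw [← lintegral_union measurableSet_Ioi (Ioc_disjoint_Ioi le_rfl),
      Ioc_union_Ioi_eq_Ioi ha.le, h1]
  have hIoc_ne : ∫⁻ t in Ioc (0 : ℝ) a, F t ∂volume ≠ ∞ := by
    intro hcontra; rw [hcontra] at h2; simp at h2
  have hIoi_ne : ∫⁻ t in Ioi a, F t ∂volume ≠ ∞ := by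
    intro hcontra; rw [hcontra] at h2; simp at h2
  -- the Bochner integral of wP over Ioc 0 a
  have h4 : ∫ η in Ioc (0 : ℝ) a, (F η).toReal
      = (∫⁻ t in Ioc (0 : ℝ) a, F t ∂volume).toReal := by
    refine integral_toReal (hF_meas.aemeasurable) ?_
    exact Filter.Eventually.of_forall fun t => lt_of_le_of_lt (hF_le1 t) ENNReal.one_lt_top
  -- translation: tail integral over Ioi a equals layer cake of max (r - a) 0
  have h6 : ∫⁻ x, ENNReal.ofReal (max (r x - a) 0) ∂P = ∫⁻ t in Ioi a, F t ∂volume := by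
    have hmm : Measurable fun x => max (r x - a) 0 :=
      (hrm.sub measurable_const).max measurable_const
    rw [lintegral_eq_lintegral_meas_le (f := fun x => max (r x - a) 0) P
      (Filter.Eventually.of_forall fun x => le_max_right _ _) hmm.aemeasurable]
    have step1 : ∫⁻ t in Ioi (0 : ℝ), P {x | t ≤ max (r x - a) 0} ∂volume
        = ∫⁻ t in Ioi (0 : ℝ), F (t + a) ∂volume := by
      refine setLIntegral_congr_fun measurableSet_Ioi (fun t ht => ?_)
      congr 1
      ext x
      simp only [Set.mem_setOf_eq, le_max_iff, hF_def]
      constructor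
      · rintro (h' | h')
        · linarith
        · exact absurd (lt_of_lt_of_le ht h') (lt_irrefl _)
      · intro h'; left; linarith
    rw [step1]
    have step2 : ∫⁻ t in Ioi (0 : ℝ), F (t + a) ∂volume
        = ∫⁻ t in Ioi a, F t ∂volume := by
      rw [← lintegral_indicator measurableSet_Ioi, ← lintegral_indicator measurableSet_Ioi]
      rw [← lintegral_add_right_eq_self (fun t => (Ioi a).indicator F t) a]
      refine lintegral_congr fun t => ?_
      by_cases ht : 0 < t
      · rw [Set.indicator_of_mem (by exact ht) , Set.indicator_of_mem (by simpa using ht)]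
      · rw [Set.indicator_of_notMem (by exact ht),
          Set.indicator_of_notMem (by simpa using ht)]
    exact step2
  -- convert Bochner integral of max to lintegral
  have h7 : ∫ x, max (r x - a) 0 ∂P
      = (∫⁻ x, ENNReal.ofReal (max (r x - a) 0) ∂P).toReal := by
    exact integral_eq_lintegral_of_nonneg_ae
      (Filter.Eventually.of_forall fun x => le_max_right _ _)
      ((hrm.sub measurable_const).max measurable_const).aestronglyMeasurable
  -- real arithmetic
  have hsum : (∫⁻ t in Ioc (0 : ℝ) a, F t ∂volume).toReal
      + (∫⁻ t in Ioi a, F t ∂volume).toReal = 1 := by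
    rw [← ENNReal.toReal_add hIoc_ne hIoi_ne, h2, ENNReal.toReal_one]
  rw [h7, h6]
  have : ∫ η in Ioc (0 : ℝ) a, (P {x | η ≤ r x}).toReal
      = (∫⁻ t in Ioc (0 : ℝ) a, F t ∂volume).toReal := h4
  rw [this]
  linarith

/-- Strengthened Chatterjee–Diaconis bound, bias part: with
`h(x) = φ(x)·min(a/r(x), 1)` and `φ ≥ 0`, we have
`|I(φ) − I(h)| = E_Q[φ − h] ≤ ‖φ‖_{L²(Q)} · S_P(a)^{1/2}`. -/
theorem cd_bias_bound {Ω : Type*} [MeasurableSpace Ω]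
    (P Q : Measure Ω) [IsProbabilityMeasure P] [IsProbabilityMeasure Q]
    (hQP : Q ≪ P)
    (r : Ω → ℝ) (hr : ∀ x, r x = (Q.rnDeriv P x).toReal)
    (wP : ℝ → ℝ) (hwP : ∀ η, wP η = (P {x | η ≤ r x}).toReal)
    (SP : ℝ → ℝ) (hSP : ∀ t, SP t = 1 - ∫ η in Set.Ioc (0 : ℝ) t, wP η)
    (φ : Ω → ℝ) (hφmeas : Measurable φ) (hφpos : ∀ x, 0 ≤ φ x)
    (hφ : MeasureTheory.MemLp φ 2 Q)
    (a : ℝ) (ha : 0 < a)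
    (h : Ω → ℝ) (hdef : ∀ x, h x = φ x * min (a / r x) 1)
    (hinth : Integrable h Q) (hintφ : Integrable φ Q) :
    |(∫ x, φ x ∂Q) - ∫ x, h x ∂Q| = ∫ x, (φ x - h x) ∂Q ∧
    |(∫ x, φ x ∂Q) - ∫ x, h x ∂Q|
      ≤ Real.sqrt (∫ x, (φ x) ^ 2 ∂Q) * Real.sqrt (SP a) := by
  have hrm : Measurable r := by
    have : r = fun x => (Q.rnDeriv P x).toReal := funext hr
    rw [this]; exact (Measure.measurable_rnDeriv Q P).ennreal_toReal
  have hr_nonneg : ∀ x, 0 ≤ r x := fun x => by rw [hr]; exact ENNReal.toReal_nonneg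
  set g : Ω → ℝ := fun x => 1 - min (a / r x) 1 with hg_def
  have hmin_nonneg : ∀ x, 0 ≤ min (a / r x) 1 :=
    fun x => le_min (div_nonneg ha.le (hr_nonneg x)) zero_le_one
  have hg_nonneg : ∀ x, 0 ≤ g x := fun x => by
    simp only [hg_def]; have := min_le_right (a / r x) 1; linarith
  have hg_le1 : ∀ x, g x ≤ 1 := fun x => by
    simp only [hg_def]; have := hmin_nonneg x; linarith
  have hg_meas : Measurable g :=
    measurable_const.sub ((measurable_const.div hrm).min measurable_const)
  have hsub : ∀ x, φ x - h x = φ x * g x := fun x => by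
    rw [hdef]; simp only [hg_def]; ring
  have hhle : ∀ x, h x ≤ φ x := fun x => by
    rw [hdef]
    calc φ x * min (a / r x) 1 ≤ φ x * 1 :=
          mul_le_mul_of_nonneg_left (min_le_right _ _) (hφpos x)
      _ = φ x := mul_one _
  have hint_sub : ∫ x, (φ x - h x) ∂Q = (∫ x, φ x ∂Q) - ∫ x, h x ∂Q :=
    integral_sub hintφ hinth
  have hle : ∫ x, h x ∂Q ≤ ∫ x, φ x ∂Q := integral_mono hinth hintφ hhle
  have part1 : |(∫ x, φ x ∂Q) - ∫ x, h x ∂Q| = ∫ x, (φ x - h x) ∂Q := by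
    rw [hint_sub]; exact abs_of_nonneg (by linarith)
  refine ⟨part1, ?_⟩
  -- ∫ g dQ = SP a
  have hpt : ∀ x, (Q.rnDeriv P x).toReal • g x = max (r x - a) 0 := by
    intro x
    have hrx : (Q.rnDeriv P x).toReal = r x := (hr x).symm
    rw [hrx, smul_eq_mul]
    rcases eq_or_lt_of_le (hr_nonneg x) with h0 | h0
    · rw [← h0]
      simp only [hg_def, div_zero, min_eq_left zero_le_one]
      rw [max_eq_right (by linarith)]
      ring
    · by_cases hcase : a ≤ r x
      · have hdiv : a / r x ≤ 1 := (div_le_one h0).mpr hcase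
        simp only [hg_def, min_eq_left hdiv]
        rw [max_eq_left (by linarith)]
        field_simp
      · push_neg at hcase
        have hdiv : 1 ≤ a / r x := (one_le_div h0).mpr hcase.le
        simp only [hg_def, min_eq_right hdiv]
        rw [max_eq_right (by linarith)]
        ring
  have key : ∫ x, g x ∂Q = SP a := by
    have h8 : ∫ x, (Q.rnDeriv P x).toReal • g x ∂P = ∫ x, g x ∂Q :=
      integral_rnDeriv_smul hQP
    have htail := cd_aux_tail P Q hQP a ha
    simp only [← hr] at htail
    calc ∫ x, g x ∂Q = ∫ x, (Q.rnDeriv P x).toReal • g x ∂P := h8.symm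
      _ = ∫ x, max (r x - a) 0 ∂P := integral_congr_ae (Filter.Eventually.of_forall hpt)
      _ = 1 - ∫ η in Set.Ioc (0 : ℝ) a, (P {x | η ≤ r x}).toReal := htail
      _ = SP a := by
          rw [hSP]
          congr 1
          exact integral_congr_ae (Filter.Eventually.of_forall fun η => (hwP η).symm)
  -- integrability of g and g²
  have hgmem : ∀ p : ℝ≥0∞, MemLp g p Q := fun p =>
    MemLp.of_bound hg_meas.aestronglyMeasurable 1
      (Filter.Eventually.of_forall fun x => by
        rw [Real.norm_eq_abs, abs_le]; exact ⟨by linarith [hg_nonneg x], hg_le1 x⟩)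
  have hint_g : Integrable g Q := memLp_one_iff_integrable.mp (hgmem 1)
  have hint_g2 : Integrable (fun x => g x ^ 2) Q :=
    memLp_one_iff_integrable.mp
      (MemLp.of_bound ((hg_meas.pow_const 2).aestronglyMeasurable) 1
        (Filter.Eventually.of_forall fun x => by
          rw [Real.norm_eq_abs, abs_le]
          constructor
          · nlinarith [hg_nonneg x]
          · nlinarith [hg_nonneg x, hg_le1 x]))
  -- Cauchy-Schwarz
  have hconj : Real.HolderConjugate 2 2 := Real.HolderConjugate.two_two
  have hofReal : ENNReal.ofReal (2 : ℝ) = 2 := by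
    rw [ENNReal.ofReal_ofNat]
  have hCS := integral_mul_le_Lp_mul_Lq_of_nonneg hconj
    (Filter.Eventually.of_forall hφpos) (Filter.Eventually.of_forall hg_nonneg)
    (μ := Q) (by rw [hofReal]; exact hφ) (by rw [hofReal]; exact hgmem 2)
  have hrpow : ∀ y : ℝ, y ^ (2 : ℝ) = y ^ 2 := fun y => by
    rw [show (2 : ℝ) = ((2 : ℕ) : ℝ) by norm_num, Real.rpow_natCast]
  simp only [hrpow] at hCS
  rw [← Real.sqrt_eq_rpow, ← Real.sqrt_eq_rpow] at hCS
  -- ∫ g² ≤ ∫ g = SP a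
  have hg2le : ∫ x, g x ^ 2 ∂Q ≤ SP a := by
    rw [← key]
    exact integral_mono hint_g2 hint_g fun x => by nlinarith [hg_nonneg x, hg_le1 x]
  have hfinal : ∫ x, φ x * g x ∂Q
      ≤ Real.sqrt (∫ x, (φ x) ^ 2 ∂Q) * Real.sqrt (SP a) :=
    le_trans hCS
      (mul_le_mul_of_nonneg_left (Real.sqrt_le_sqrt hg2le) (Real.sqrt_nonneg _))
  rw [part1]
  calc ∫ x, (φ x - h x) ∂Q = ∫ x, φ x * g x ∂Q :=
        integral_congr_ae (Filter.Eventually.of_forall hsub)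
    _ ≤ _ := hfinal
end
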